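/- Let ι be a cominuscule node, so that the coefficient of α_ι in every positive root is at most 1, and set w_P := w_0^P w_0. Then w_P^{-1}(α_ι) = −θ, where θ is the highest root. -/

import Mathlib

/- A combinatorial framework for reduced crystallographic root systems with a
chosen system of simple roots, realized inside a real inner product space.
Weyl group elements are represented as plain functions `V → V` that are
compositions of simple reflections; `len` is the Coxeter length. -/

noncomputable section
open Classical
open scoped RealInnerProductSpace

namespace Pp

variable {V : Type*} [NormedAddCommGroup V] [InnerProductSpace ℝ V]

/-- The coroot pairing `⟨x, α^∨⟩ = 2⟨x,α⟩/⟨α,α⟩`. -/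
def cpr (x α : V) : ℝ := 2 * ⟪x, α⟫ / ⟪α, α⟫

/-- The reflection `s_α`, as a plain function. -/
def sref (α : V) : V → V := fun x => x - cpr x α • α

/-- `w` is a product of `n` reflections in simple roots taken from `Δ`. -/
def IsWord (Δ : Finset V) (w : V → V) (n : ℕ) : Prop :=
  ∃ l : List V, l.length = n ∧ (∀ α ∈ l, α ∈ Δ) ∧ w = (l.map sref).foldr (· ∘ ·) id

/-- The Weyl group generated by the simple reflections, as a set of functions. -/
def Weyl (Δ : Finset V) : Set (V → V) := { w | ∃ n, IsWord Δ w n }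

/-- Coxeter length with respect to the simple system `Δ`. -/
def len (Δ : Finset V) (w : V → V) : ℕ := sInf { n | IsWord Δ w n }

/-- The positive roots: roots which are nonnegative combinations of the
simple roots in `Δ`.  For a sub-system `Δ' ⊆ Δ`, `Pos Φ Δ'` is the set of
positive roots supported on `Δ'`. -/
def Pos (Φ Δ : Finset V) : Finset V :=
  Φ.filter fun β => ∃ c : V → ℝ, (∀ α ∈ Δ, 0 ≤ c α) ∧ β = ∑ α ∈ Δ, c α • α

/-- Half sum of positive roots. -/
def rho (Φ Δ : Finset V) : V := (2:ℝ)⁻¹ • ∑ β ∈ Pos Φ Δ, β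

/-- The axioms of a reduced crystallographic root system `Φ` with simple
system `Δ`. -/
structure IsRS (Φ Δ : Finset V) : Prop where
  zero_not_mem : (0:V) ∉ Φ
  neg_mem : ∀ α ∈ Φ, -α ∈ Φ
  reduced : ∀ α ∈ Φ, ∀ t : ℝ, t • α ∈ (Φ : Set V) → t = 1 ∨ t = -1
  cryst : ∀ α ∈ Φ, ∀ β ∈ Φ, ∃ k : ℤ, (k : ℝ) = cpr α β
  refl_mem : ∀ α ∈ Φ, ∀ β ∈ Φ, sref α β ∈ Φ
  simple_mem : ∀ α ∈ Δ, α ∈ Φ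
  simple_indep : LinearIndependent ℝ (fun α : Δ => (α : V))
  pos_or_neg : ∀ β ∈ Φ, β ∈ Pos Φ Δ ∨ -β ∈ Pos Φ Δ

/-- `β` is a quantum root: `ℓ(s_β) = ⟨2ρ, β^∨⟩ - 1`. -/
def IsQuantum (Φ Δ : Finset V) (β : V) : Prop :=
  (len Δ (sref β) : ℝ) = cpr ((2:ℝ) • rho Φ Δ) β - 1

/-- Minimal length coset representatives `W^P`: elements of `W` mapping the
positive roots of the parabolic (`Pos Φ ΔP`) to positive roots. -/
def MinRep (Φ Δ ΔP : Finset V) (w : V → V) : Prop :=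
  w ∈ Weyl Δ ∧ ∀ β ∈ Pos Φ ΔP, w β ∈ Pos Φ Δ

/-- `θ` is the highest root. -/
def IsHighest (Φ Δ : Finset V) (θ : V) : Prop :=
  θ ∈ Pos Φ Δ ∧ ∀ β ∈ Φ, ∃ c : V → ℝ, (∀ α ∈ Δ, 0 ≤ c α) ∧ θ - β = ∑ α ∈ Δ, c α • α

/-- All roots have the same length. -/
def SimplyLaced (Φ : Finset V) : Prop := ∀ α ∈ Φ, ∀ β ∈ Φ, ⟪α, α⟫ = ⟪β, β⟫

/-- The node `ι ∈ Δ` is minuscule: the coefficient of `α_ι^∨` in every coroot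
is at most `1`. -/
def Minuscule (Φ Δ : Finset V) (ι : V) : Prop :=
  ∀ β ∈ Φ, ∀ c : V → ℝ,
    (2 / ⟪β, β⟫) • β = ∑ α ∈ Δ, c α • ((2 / ⟪α, α⟫) • α) → c ι ≤ 1

/-- The node `ι ∈ Δ` is cominuscule: the coefficient of `α_ι` in every
positive root is at most `1`. -/
def Cominuscule (Φ Δ : Finset V) (ι : V) : Prop :=
  ∀ β ∈ Pos Φ Δ, ∀ c : V → ℝ,
    ((∀ α ∈ Δ, 0 ≤ c α) ∧ β = ∑ α ∈ Δ, c α • α) → c ι ≤ 1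

/-- `(Φ, Δ)` is the root system of type `B_n` in the standard coordinates
given by the orthonormal family `e`. -/
def TypeBData (Φ Δ : Finset V) (n : ℕ) (e : Fin n → V) : Prop :=
  Orthonormal ℝ e ∧
  (Φ : Set V) =
    ({v | ∃ i j : Fin n, i ≠ j ∧ (v = e i - e j ∨ v = e i + e j ∨ v = -(e i + e j))} ∪
     {v | ∃ i : Fin n, v = e i ∨ v = -(e i)}) ∧
  (Δ : Set V) =
    ({v | ∃ i : Fin n, ∃ h : (i : ℕ) + 1 < n, v = e i - e ⟨(i : ℕ) + 1, h⟩} ∪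
     {v | ∃ h : 0 < n, v = e ⟨n - 1, by omega⟩})

/-- `(Φ, Δ)` is the root system of type `C_n` in the standard coordinates
given by the orthonormal family `e`. -/
def TypeCData (Φ Δ : Finset V) (n : ℕ) (e : Fin n → V) : Prop :=
  Orthonormal ℝ e ∧
  (Φ : Set V) =
    ({v | ∃ i j : Fin n, i ≠ j ∧ (v = e i - e j ∨ v = e i + e j ∨ v = -(e i + e j))} ∪
     {v | ∃ i : Fin n, v = (2:ℝ) • e i ∨ v = -((2:ℝ) • e i)}) ∧
  (Δ : Set V) =
    ({v | ∃ i : Fin n, ∃ h : (i : ℕ) + 1 < n, v = e i - e ⟨(i : ℕ) + 1, h⟩} ∪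
     {v | ∃ h : 0 < n, v = (2:ℝ) • e ⟨n - 1, by omega⟩})

/-- `γ` is the distinguished (quantum) root attached to the minuscule node
`ι`: `γ = α_ι` in the simply-laced case, `γ = α_{n-1} + 2α_n = e_{n-1} + e_n`
in type `B_n` (with `ι = n`), and `γ = θ = 2e_1` in type `C_n` (with `ι = 1`). -/
def DistinguishedGamma (Φ Δ : Finset V) (ι γ : V) : Prop :=
  (SimplyLaced Φ ∧ γ = ι) ∨
  (∃ n : ℕ, ∃ _h : 2 ≤ n, ∃ e : Fin n → V, TypeBData Φ Δ n e ∧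
    ι = e ⟨n - 1, by omega⟩ ∧ γ = e ⟨n - 2, by omega⟩ + e ⟨n - 1, by omega⟩) ∨
  (∃ n : ℕ, ∃ _h : 2 ≤ n, ∃ e : Fin n → V, TypeCData Φ Δ n e ∧
    ι = e ⟨0, by omega⟩ - e ⟨1, by omega⟩ ∧ γ = (2:ℝ) • e ⟨0, by omega⟩)

def wlist (l : List V) : V → V := (l.map sref).foldr (· ∘ ·) id

lemma wlist_nil : wlist ([] : List V) = id := rfl
lemma wlist_cons (a : V) (l : List V) : wlist (a :: l) = sref a ∘ wlist l := rfl

lemma cpr_add_left (x y α : V) : cpr (x + y) α = cpr x α + cpr y α := by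
  simp [cpr, inner_add_left]; ring

lemma cpr_smul_left (t : ℝ) (x α : V) : cpr (t • x) α = t * cpr x α := by
  simp [cpr, inner_smul_left]; ring

lemma sref_linear (α : V) : IsLinearMap ℝ (sref α) := by
  constructor
  · intro x y; simp [sref, cpr_add_left, add_smul]; abel
  · intro t x; simp [sref, cpr_smul_left, mul_smul, smul_sub]

lemma wlist_linear (l : List V) : IsLinearMap ℝ (wlist l) := by
  induction l with
  | nil => exact ⟨fun _ _ => rfl, fun _ _ => rfl⟩
  | cons a l ih =>
    rw [wlist_cons]
    exact ⟨fun x y => by simp [Function.comp, ih.map_add, (sref_linear a).map_add],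
           fun t x => by simp [Function.comp, ih.map_smul, (sref_linear a).map_smul]⟩

lemma cpr_self (α : V) (h : α ≠ 0) : cpr α α = 2 := by
  have : ⟪α, α⟫ ≠ 0 := fun hc => h (inner_self_eq_zero.mp hc)
  rw [cpr, mul_div_assoc, div_self this, mul_one]

lemma sref_sref (α x : V) : sref α (sref α x) = x := by
  by_cases h : α = 0
  · simp [sref, h]
  · have hn : ⟪α, α⟫ ≠ (0:ℝ) := fun hc => h (inner_self_eq_zero.mp hc)
    have h2 : cpr (x - cpr x α • α) α = - cpr x α := by
      simp only [cpr, inner_sub_left, inner_smul_left, RCLike.ofReal_real_eq_id, id, conj_trivial]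
      field_simp
      ring
    simp [sref, h2]

lemma wlist_append (l₁ l₂ : List V) (x : V) :
    wlist (l₁ ++ l₂) x = wlist l₁ (wlist l₂ x) := by
  induction l₁ with
  | nil => rfl
  | cons a l ih => simp [wlist_cons, Function.comp, ih]

lemma wlist_reverse_apply (l : List V) (x : V) :
    wlist l.reverse (wlist l x) = x := by
  induction l generalizing x with
  | nil => rfl
  | cons a l ih =>
    have : (a :: l).reverse = l.reverse ++ [a] := by simp
    rw [wlist_cons, this, wlist_append]
    show wlist l.reverse (wlist [a] (sref a (wlist l x))) = x
    have h1 : wlist [a] = sref a := by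
      funext y; simp [wlist, Function.comp]
    rw [h1, sref_sref, ih]

lemma wlist_apply_reverse (l : List V) (x : V) :
    wlist l (wlist l.reverse x) = x := by
  have := wlist_reverse_apply l.reverse x
  simpa using this

lemma wlist_mem (Φ : Finset V) (hΦ : ∀ α ∈ Φ, ∀ β ∈ Φ, sref α β ∈ Φ)
    (l : List V) (hl : ∀ a ∈ l, a ∈ Φ) : ∀ β ∈ Φ, wlist l β ∈ Φ := by
  induction l with
  | nil => exact fun β hβ => hβ
  | cons a l ih =>
    intro β hβ
    rw [wlist_cons]
    exact hΦ a (hl a (by simp)) _ (ih (fun b hb => hl b (by simp [hb])) β hβ)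

-- coefficient uniqueness
lemma coeff_zero {Φ Δ : Finset V} (hRS : IsRS Φ Δ) (c : V → ℝ)
    (h : ∑ α ∈ Δ, c α • α = 0) : ∀ α ∈ Δ, c α = 0 := by
  have hli := linearIndependent_iff'.mp hRS.simple_indep Finset.univ (fun x => c x)
  have hsum : ∑ i : Δ, c (i : V) • (i : V) = ∑ α ∈ Δ, c α • α :=
    Finset.sum_coe_sort Δ (fun α => c α • α)
  intro α hα
  exact hli (by rw [hsum]; exact h) ⟨α, hα⟩ (Finset.mem_univ _)

lemma coeff_unique {Φ Δ : Finset V} (hRS : IsRS Φ Δ) (c d : V → ℝ)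
    (h : ∑ α ∈ Δ, c α • α = ∑ α ∈ Δ, d α • α) : ∀ α ∈ Δ, c α = d α := by
  intro α hα
  have : ∑ β ∈ Δ, (c β - d β) • β = 0 := by
    simp [sub_smul, Finset.sum_sub_distrib, h]
  have := coeff_zero hRS _ this α hα
  linarith

def InCone (S : Finset V) (x : V) : Prop :=
  ∃ c : V → ℝ, (∀ α ∈ S, 0 ≤ c α) ∧ x = ∑ α ∈ S, c α • α

lemma InCone_zero (S : Finset V) : InCone S (0:V) :=
  ⟨fun _ => 0, fun _ _ => le_refl _, by simp⟩

lemma InCone_add {S : Finset V} {x y : V} (hx : InCone S x) (hy : InCone S y) :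
    InCone S (x + y) := by
  obtain ⟨c, hc, rfl⟩ := hx; obtain ⟨d, hd, rfl⟩ := hy
  exact ⟨fun α => c α + d α, fun α hα => add_nonneg (hc α hα) (hd α hα),
    by simp [add_smul, Finset.sum_add_distrib]⟩

lemma InCone_smul {S : Finset V} {x : V} {t : ℝ} (ht : 0 ≤ t) (hx : InCone S x) :
    InCone S (t • x) := by
  obtain ⟨c, hc, rfl⟩ := hx
  exact ⟨fun α => t * c α, fun α hα => mul_nonneg ht (hc α hα),
    by simp [Finset.smul_sum, mul_smul]⟩

lemma InCone_sum {S : Finset V} {ι' : Type*} (s : Finset ι') (f : ι' → V)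
    (h : ∀ a ∈ s, InCone S (f a)) : InCone S (∑ a ∈ s, f a) :=
  Finset.sum_induction f _ (fun _ _ => InCone_add) (InCone_zero S) h

lemma InCone_of_pos {Φ S : Finset V} {β : V} (h : β ∈ Pos Φ S) : InCone S β := by
  rw [Pos, Finset.mem_filter] at h
  exact h.2

lemma InCone_antisymm {Φ Δ : Finset V} (hRS : IsRS Φ Δ) {S : Finset V}
    (hS : S ⊆ Δ) {x : V} (hx : InCone S x) (hx' : InCone S (-x)) : x = 0 := by
  obtain ⟨c, hc, hxe⟩ := hx; obtain ⟨d, hd, hxe'⟩ := hx'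
  have hsum : ∑ α ∈ S, (c α + d α) • α = 0 := by
    simp only [add_smul, Finset.sum_add_distrib, ← hxe, ← hxe']
    simp
  set e : V → ℝ := fun α => if α ∈ S then c α + d α else 0 with he
  have hsum2 : ∑ α ∈ Δ, e α • α = 0 := by
    rw [← Finset.sum_subset hS (fun α _ hα => by simp [he, hα])]
    rw [← hsum]
    exact Finset.sum_congr rfl (fun α hα => by simp [he, hα])
  have hz := coeff_zero hRS e hsum2
  have : ∀ α ∈ S, c α = 0 := by
    intro α hα
    have := hz α (hS hα)
    simp [he, hα] at this
    linarith [hc α hα, hd α hα]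
  rw [hxe]
  exact Finset.sum_eq_zero (fun α hα => by rw [this α hα, zero_smul])

lemma simple_mem_Pos {Φ : Finset V} (S : Finset V) (hS : ∀ a ∈ S, a ∈ Φ)
    {a : V} (ha : a ∈ S) : a ∈ Pos Φ S := by
  rw [Pos, Finset.mem_filter]
  refine ⟨hS a ha, fun β => if β = a then 1 else 0, fun β _ => by positivity, ?_⟩
  rw [Finset.sum_congr rfl (fun β _ => by rw [ite_smul, one_smul, zero_smul]),
    Finset.sum_ite_eq' S a (fun β => β), if_pos ha]

lemma wlist_sub_span (S : Finset V) (l : List V) (hl : ∀ a ∈ l, a ∈ S) (x : V) :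
    ∃ c : V → ℝ, wlist l x - x = ∑ α ∈ S, c α • α := by
  induction l with
  | nil => exact ⟨fun _ => 0, by simp [wlist_nil]⟩
  | cons a l ih =>
    obtain ⟨c, hc⟩ := ih (fun b hb => hl b (by simp [hb]))
    set y := wlist l x with hy
    refine ⟨fun α => c α + (if α = a then -(cpr y a) else 0), ?_⟩
    have hsum : ∑ α ∈ S, (c α + (if α = a then -(cpr y a) else 0)) • α
        = (∑ α ∈ S, c α • α) + (-(cpr y a)) • a := by
      rw [Finset.sum_congr rfl (fun β _ => add_smul _ _ _), Finset.sum_add_distrib]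
      congr 1
      rw [Finset.sum_congr rfl (fun β _ => by rw [ite_smul, zero_smul]),
        Finset.sum_ite_eq' S a (fun β => (-(cpr y a)) • β), if_pos (hl a (by simp))]
    rw [hsum, ← hc, wlist_cons]
    show sref a y - x = y - x + -cpr y a • a
    rw [sref]
    module

lemma mem_Pos_root {Φ S : Finset V} {β : V} (h : β ∈ Pos Φ S) : β ∈ Φ :=
  (Finset.mem_filter.mp h).1

lemma key_cone {Φ Δ : Finset V} (hRS : IsRS Φ Δ) {ι : V} (hι : ι ∈ Δ)
    (hcom : ∀ β ∈ Pos Φ Δ, ∀ c : V → ℝ,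
      ((∀ α ∈ Δ, 0 ≤ c α) ∧ β = ∑ α ∈ Δ, c α • α) → c ι ≤ 1)
    {x : V} (hx : x ∈ Φ)
    (hsp : ∃ c : V → ℝ, x - ι = ∑ α ∈ Δ.erase ι, c α • α) :
    InCone (Δ.erase ι) (x - ι) := by
  obtain ⟨c, hc⟩ := hsp
  set c'' : V → ℝ := fun α => if α = ι then 1 else c α with hc''
  have hrep : ∑ α ∈ Δ, c'' α • α = x := by
    rw [← Finset.add_sum_erase Δ (fun α => c'' α • α) hι]
    have h1 : c'' ι • ι = ι := by simp [hc'']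
    have h2 : ∑ α ∈ Δ.erase ι, c'' α • α = ∑ α ∈ Δ.erase ι, c α • α :=
      Finset.sum_congr rfl (fun α hα => by
        simp [hc'', (Finset.mem_erase.mp hα).1])
    rw [h1, h2, ← hc]
    abel
  rcases hRS.pos_or_neg x hx with hpos | hneg
  · obtain ⟨-, b, hb, hxb⟩ := Finset.mem_filter.mp hpos
    have := coeff_unique hRS b c'' (by rw [← hxb, hrep])
    refine ⟨c, fun α hα => ?_, hc⟩
    have hne := (Finset.mem_erase.mp hα).1
    have := this α (Finset.mem_of_mem_erase hα)
    simp [hc'', hne] at this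
    rw [← this]
    exact hb α (Finset.mem_of_mem_erase hα)
  · obtain ⟨-, b, hb, hxb⟩ := Finset.mem_filter.mp hneg
    exfalso
    have hxb' : x = ∑ α ∈ Δ, (-(b α)) • α := by
      have : -x = ∑ α ∈ Δ, b α • α := hxb
      rw [← neg_eq_iff_eq_neg.mpr this.symm]
      simp [Finset.sum_neg_distrib]
    have := coeff_unique hRS (fun α => -(b α)) c'' (by rw [← hxb', hrep])
    have hii := this ι hι
    simp [hc''] at hii
    linarith [hb ι hι]

lemma sum_erase_of_zero {Δ : Finset V} {ι : V} (hι : ι ∈ Δ) (c : V → ℝ)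
    (h : c ι = 0) : ∑ α ∈ Δ, c α • α = ∑ α ∈ Δ.erase ι, c α • α := by
  rw [← Finset.add_sum_erase Δ _ hι, h, zero_smul, zero_add]

lemma sum_extend {S Δ : Finset V} (hS : S ⊆ Δ) (c : V → ℝ) :
    ∑ α ∈ Δ, (if α ∈ S then c α else 0) • α = ∑ α ∈ S, c α • α := by
  rw [← Finset.sum_subset hS (fun α _ hα => by simp [hα])]
  exact Finset.sum_congr rfl (fun α hα => by simp [hα])

end Pp

open Pp in
/-- Lemma: for a cominuscule node `ι` and `w_P = w_0^P w_0`, one has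
`w_P⁻¹(α_ι) = -θ`. -/
theorem stmt11 {V : Type*} [NormedAddCommGroup V] [InnerProductSpace ℝ V]
    (Φ Δ : Finset V) (hRS : IsRS Φ Δ) (ι : V) (hι : ι ∈ Δ)
    (hcom : Cominuscule Φ Δ ι)
    (θ : V) (hθ : IsHighest Φ Δ θ)
    (w0 w0P wPi : V → V)
    (hw0 : w0 ∈ Weyl Δ) (hw0neg : ∀ β ∈ Pos Φ Δ, -(w0 β) ∈ Pos Φ Δ)
    (hw0P : w0P ∈ Weyl (Δ.erase ι))
    (hw0Pneg : ∀ β ∈ Pos Φ (Δ.erase ι), -(w0P β) ∈ Pos Φ (Δ.erase ι))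
    (hinv : (w0P ∘ w0) ∘ wPi = id ∧ wPi ∘ (w0P ∘ w0) = id) :
    wPi ι = -θ := by
  classical
  obtain ⟨n0, l0, -, hl0Δ, hw0e⟩ := hw0
  obtain ⟨nP, lP, -, hlPΔ, hw0Pe⟩ := hw0P
  have hw0w : w0 = wlist l0 := hw0e
  have hw0Pw : w0P = wlist lP := hw0Pe
  have hw0lin : IsLinearMap ℝ w0 := hw0w ▸ wlist_linear l0
  have hw0Plin : IsLinearMap ℝ w0P := hw0Pw ▸ wlist_linear lP
  have hθΦ : θ ∈ Φ := mem_Pos_root hθ.1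
  have hιΦ : ι ∈ Φ := hRS.simple_mem ι hι
  obtain ⟨-, cθ, hcθ0, hcθ⟩ := Finset.mem_filter.mp hθ.1
  obtain ⟨d, hd0, hdθ⟩ := hθ.2 ι hιΦ
  -- the ι-coefficient of θ is 1 and d ι = 0
  have hrep2 : θ = ∑ α ∈ Δ, (d α + if α = ι then 1 else 0) • α := by
    simp only [add_smul, Finset.sum_add_distrib, ite_smul, one_smul, zero_smul]
    rw [Finset.sum_ite_eq' Δ ι (fun β => β), if_pos hι, ← hdθ]
    abel
  have hud := coeff_unique hRS cθ (fun α => d α + if α = ι then 1 else 0)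
    (by rw [← hcθ, ← hrep2])
  have hcom1 : cθ ι ≤ 1 := hcom θ hθ.1 cθ ⟨hcθ0, hcθ⟩
  have hdι : d ι = 0 := by
    have := hud ι hι
    simp at this
    linarith [hd0 ι hι, hcom1]
  have hθι : θ - ι = ∑ α ∈ Δ.erase ι, d α • α := by
    rw [hdθ, sum_erase_of_zero hι d hdι]
  -- Step 2 : w0 θ = -θ
  have hγPos : -(w0 θ) ∈ Pos Φ Δ := hw0neg θ hθ.1
  have hγΦ : -(w0 θ) ∈ Φ := mem_Pos_root hγPos
  obtain ⟨e1, he10, he1⟩ := hθ.2 (-(w0 θ)) hγΦ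
  have hl0Φ : ∀ a ∈ l0.reverse, a ∈ Φ := fun a ha =>
    hRS.simple_mem a (hl0Δ a (List.mem_reverse.mp ha))
  have hβ'Φ : -(wlist l0.reverse θ) ∈ Φ :=
    hRS.neg_mem _ (wlist_mem Φ hRS.refl_mem l0.reverse hl0Φ θ hθΦ)
  obtain ⟨e2, he20, he2⟩ := hθ.2 (-(wlist l0.reverse θ)) hβ'Φ
  have hkey : -(w0 θ) - θ = ∑ α ∈ Δ, e2 α • (-(w0 α)) := by
    set f : V →ₗ[ℝ] V := IsLinearMap.mk' w0 hw0lin with hf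
    have hfw : ∀ x, w0 x = f x := fun x => rfl
    have h1 : w0 (θ - -(wlist l0.reverse θ)) = w0 θ + θ := by
      rw [hfw, map_sub, map_neg, sub_neg_eq_add, ← hfw, ← hfw]
      congr 1
      rw [hw0w, wlist_apply_reverse]
    have h2 : w0 (θ - -(wlist l0.reverse θ)) = ∑ α ∈ Δ, e2 α • w0 α := by
      rw [he2, hfw, map_sum]
      exact Finset.sum_congr rfl (fun α _ => by rw [map_smul]; rfl)
    have h3 : -(w0 θ) - θ = -(w0 (θ - -(wlist l0.reverse θ))) := by rw [h1]; abel
    rw [h3, h2, ← Finset.sum_neg_distrib]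
    exact Finset.sum_congr rfl (fun α _ => by rw [smul_neg])
  have hcone2 : InCone Δ (-(w0 θ) - θ) := by
    rw [hkey]
    refine InCone_sum Δ _ (fun α hα => InCone_smul (he20 α hα) ?_)
    exact InCone_of_pos (hw0neg α (simple_mem_Pos Δ hRS.simple_mem hα))
  have hcone1 : InCone Δ (θ - -(w0 θ)) := ⟨e1, he10, he1⟩
  have hγθ : θ - -(w0 θ) = 0 :=
    InCone_antisymm hRS (Finset.Subset.refl Δ) hcone1 (by rw [neg_sub]; exact hcone2)
  have hw0θ : w0 θ = -θ := by
    have h := sub_eq_zero.mp hγθ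
    exact neg_eq_iff_eq_neg.mp h.symm
  -- Step 3 : w0P θ = ι
  have hΔ'Φ : ∀ a ∈ Δ.erase ι, a ∈ Φ := fun a ha =>
    hRS.simple_mem a (Finset.mem_of_mem_erase ha)
  have hlPΦ : ∀ a ∈ lP, a ∈ Φ := fun a ha => hΔ'Φ a (hlPΔ a ha)
  have hlPrΦ : ∀ a ∈ lP.reverse, a ∈ Φ := fun a ha => hlPΦ a (List.mem_reverse.mp ha)
  have hlPrΔ' : ∀ a ∈ lP.reverse, a ∈ Δ.erase ι := fun a ha => hlPΔ a (List.mem_reverse.mp ha)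
  set δ : V := wlist lP.reverse ι with hδ
  have hδΦ : δ ∈ Φ := wlist_mem Φ hRS.refl_mem lP.reverse hlPrΦ ι hιΦ
  have hδcone : InCone (Δ.erase ι) (δ - ι) :=
    key_cone hRS hι hcom hδΦ (wlist_sub_span (Δ.erase ι) lP.reverse hlPrΔ' ι)
  obtain ⟨e3, he30, he3⟩ := hθ.2 δ hδΦ
  -- e3 ι = 0
  obtain ⟨cδ, hcδ0, hcδ⟩ := hδcone
  have hθδspan : θ - δ = ∑ α ∈ Δ.erase ι, (d α - cδ α) • α := by
    have : θ - δ = (θ - ι) - (δ - ι) := by abel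
    rw [this, hθι, hcδ]
    simp [sub_smul, Finset.sum_sub_distrib]
  have he3ι : e3 ι = 0 := by
    have hext : ∑ α ∈ Δ, (if α ∈ Δ.erase ι then d α - cδ α else 0) • α
        = ∑ α ∈ Δ.erase ι, (d α - cδ α) • α :=
      sum_extend (Finset.erase_subset ι Δ) _
    have := coeff_unique hRS e3 (fun α => if α ∈ Δ.erase ι then d α - cδ α else 0)
      (by rw [hext, ← hθδspan, ← he3])
    have h := this ι hι
    simp [Finset.notMem_erase] at h
    exact h
  have hθδ : θ - δ = ∑ α ∈ Δ.erase ι, e3 α • α := by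
    rw [he3, sum_erase_of_zero hι e3 he3ι]
  -- ι - w0P θ ∈ cone
  have hw0Pδ : w0P δ = ι := by rw [hw0Pw, hδ, wlist_apply_reverse]
  have hιγ : ι - w0P θ = ∑ α ∈ Δ.erase ι, e3 α • (-(w0P α)) := by
    set f : V →ₗ[ℝ] V := IsLinearMap.mk' w0P hw0Plin with hf
    have hfw : ∀ x, w0P x = f x := fun x => rfl
    have h2 : w0P (θ - δ) = ∑ α ∈ Δ.erase ι, e3 α • w0P α := by
      rw [hθδ, hfw, map_sum]
      exact Finset.sum_congr rfl (fun α _ => by rw [map_smul]; rfl)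
    have h3 : ι - w0P θ = -(w0P (θ - δ)) := by
      rw [hfw θ, hfw (θ - δ), map_sub, ← hfw, ← hfw, hw0Pδ]
      abel
    rw [h3, h2, ← Finset.sum_neg_distrib]
    exact Finset.sum_congr rfl (fun α _ => by rw [smul_neg])
  have hcone3 : InCone (Δ.erase ι) (ι - w0P θ) := by
    rw [hιγ]
    refine InCone_sum _ _ (fun α hα => InCone_smul (he30 α (Finset.mem_of_mem_erase hα)) ?_)
    exact InCone_of_pos (hw0Pneg α (simple_mem_Pos (Δ.erase ι) hΔ'Φ hα))
  -- w0P θ - ι ∈ cone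
  have hγ₂Φ : w0P θ ∈ Φ := by
    rw [hw0Pw]; exact wlist_mem Φ hRS.refl_mem lP hlPΦ θ hθΦ
  have hγ₂span : ∃ c : V → ℝ, w0P θ - ι = ∑ α ∈ Δ.erase ι, c α • α := by
    obtain ⟨c1, hc1⟩ := wlist_sub_span (Δ.erase ι) lP (fun a ha => hlPΔ a ha) θ
    refine ⟨fun α => c1 α + d α, ?_⟩
    have : w0P θ - ι = (wlist lP θ - θ) + (θ - ι) := by rw [← hw0Pw]; abel
    rw [this, hc1, hθι]
    simp [add_smul, Finset.sum_add_distrib]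
  have hcone4 : InCone (Δ.erase ι) (w0P θ - ι) := key_cone hRS hι hcom hγ₂Φ hγ₂span
  have hγ₂ι : w0P θ = ι := by
    have h0 : w0P θ - ι = 0 :=
      InCone_antisymm hRS (Finset.erase_subset ι Δ) hcone4
        (by rw [neg_sub]; exact hcone3)
    exact sub_eq_zero.mp h0
  -- Step 4 : conclude
  have hfin := congrFun hinv.2 (-θ)
  simp only [Function.comp_apply, id_eq] at hfin
  rw [hw0lin.map_neg, hw0θ, neg_neg, hγ₂ι] at hfin
  exact hfin
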